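/- Suppose μ_i + μ_{i+1} is a rational number which is not an integer, and write μ_i + μ_{i+1} = p/k in lowest terms (k ≥ 2, gcd(p,k) = 1). Then the braid matrix R = R_{i,i+1} has finite order exactly k in GL_{n−2}(ℂ): R^k = Id, and R^m ≠ Id for every integer m with 1 ≤ m < k. -/

import Mathlib

set_option maxHeartbeats 1000000


open Matrix Complex

/-- The braid "transposition" `R_{i,i+1}` acting on intersection homology `ℂ^{n−2}` in the
standard basis `I_{1,2}, …, I_{n−2,n−1}`.  Here `i` is the 1-based index, `1 ≤ i ≤ n − 2`;
a 0-based row index `a : Fin (n-2)` corresponds to the 1-based index `a.val + 1`. -/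
noncomputable def DMrefl (n : ℕ) (μ : ℕ → ℝ) (i : ℕ) : Matrix (Fin (n - 2)) (Fin (n - 2)) ℂ :=
  fun a b =>
    let α : ℕ → ℂ := fun m => Complex.exp (2 * Real.pi * Complex.I * (μ m))
    if a.val + 1 = i then
      (if b.val + 1 = i then α i * α (i + 1)
       else if b.val + 2 = i then 1 - α (i + 1)
       else if b.val = i then α (i + 1) * (1 - α i)
       else 0)
    else if a = b then 1 else 0

/-- If `μ_i + μ_{i+1} = p/k` is rational and not an integer, in lowest terms with `k ≥ 2`,
then the braid matrix `R = R_{i,i+1}` has order exactly `k` in `GL_{n−2}(ℂ)`: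
`R^k = Id` and `R^m ≠ Id` for `1 ≤ m < k`. -/
theorem dmrefl_order (n : ℕ) (hn : 3 ≤ n) (μ : ℕ → ℝ)
    (hμ : ∀ j, 1 ≤ j → j ≤ n → 0 < μ j ∧ μ j < 1)
    (i : ℕ) (hi1 : 1 ≤ i) (hi2 : i ≤ n - 2)
    (p : ℤ) (k : ℕ) (hk : 2 ≤ k) (hcop : Int.gcd p (k : ℤ) = 1)
    (hsum : μ i + μ (i + 1) = (p : ℝ) / (k : ℝ)) :
    DMrefl n μ i ^ k = 1 ∧ ∀ m : ℕ, 1 ≤ m → m < k → DMrefl n μ i ^ m ≠ 1 := by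
  have hrlt : i - 1 < n - 2 := by omega
  set r : Fin (n - 2) := ⟨i - 1, hrlt⟩ with hr
  have hrval : r.val + 1 = i := by simp [hr]; omega
  set β : ℂ := Complex.exp (2 * Real.pi * Complex.I * (μ i)) *
      Complex.exp (2 * Real.pi * Complex.I * (μ (i+1))) with hβ
  set R := DMrefl n μ i with hR
  set E : Matrix (Fin (n-2)) (Fin (n-2)) ℂ := R - 1 with hE
  have hRrow : ∀ a b : Fin (n-2), a ≠ r → R a b = if a = b then 1 else 0 := by
    intro a b ha
    have h1 : a.val + 1 ≠ i := by
      intro h; exact ha (Fin.ext (by omega))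
    simp [hR, DMrefl, h1]
  have hErow : ∀ a b : Fin (n-2), a ≠ r → E a b = 0 := by
    intro a b ha
    simp only [hE, Matrix.sub_apply, hRrow a b ha, Matrix.one_apply]
    split <;> simp
  have hErr : E r r = β - 1 := by
    simp [hE, Matrix.sub_apply, Matrix.one_apply, hR, DMrefl, hrval, hβ]
  have hEE : E * E = (β - 1) • E := by
    ext a b
    by_cases ha : a = r
    · subst ha
      rw [Matrix.mul_apply, Finset.sum_eq_single r]
      · simp [hErr]
      · intro c _ hc; rw [hErow c b hc, mul_zero]
      · simp
    · simp [Matrix.mul_apply, hErow _ _ ha]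
  clear_value R E
  have hpow : ∀ m : ℕ, R ^ m = 1 + (∑ j ∈ Finset.range m, β ^ j) • E := by
    intro m
    induction m with
    | zero => simp
    | succ m ih =>
      have hR1 : R = 1 + E := by rw [hE]; abel
      rw [pow_succ, ih, hR1, geom_sum_succ]
      set c := ∑ j ∈ Finset.range m, β ^ j with hc
      have key : ((1:ℂ) + c + c*(β-1)) = β * c + 1 := by ring
      calc (1 + c • E) * (1 + E)
          = 1 + ((1:ℂ) + c + c*(β-1)) • E := by
            simp only [mul_add, add_mul, one_mul, mul_one, smul_mul_assoc, hEE,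
              smul_smul, add_smul, one_smul]
            abel
        _ = 1 + (β * c + 1) • E := by rw [key]
  -- β facts
  have hk0 : (k:ℂ) ≠ 0 := Nat.cast_ne_zero.mpr (by omega)
  have hβval : β = Complex.exp (2 * Real.pi * Complex.I * ((p:ℂ)/(k:ℂ))) := by
    rw [hβ, ← Complex.exp_add, ← mul_add]
    congr 1
    rw [← Complex.ofReal_add, hsum]
    push_cast
    ring
  have hβpow : ∀ m : ℕ, β ^ m = Complex.exp ((2 * Real.pi * Complex.I) * ((m:ℂ) * (p:ℂ)/(k:ℂ))) := by
    intro m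
    rw [hβval, ← Complex.exp_nat_mul]
    congr 1
    ring
  have hkp : (k:ℂ) * (p:ℂ)/(k:ℂ) = (p:ℂ) := mul_div_cancel_left₀ _ hk0
  have hβk : β ^ k = 1 := by
    rw [hβpow, hkp, mul_comm, Complex.exp_int_mul_two_pi_mul_I]
  have hβm : ∀ m : ℕ, 1 ≤ m → m < k → β ^ m ≠ 1 := by
    intro m hm1 hm2 h
    rw [hβpow, Complex.exp_eq_one_iff] at h
    obtain ⟨t, ht⟩ := h
    have hπ : (2 * (Real.pi:ℂ) * Complex.I) ≠ 0 := by
      simp [Real.pi_ne_zero, Complex.I_ne_zero]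
    have h2 : ((m:ℂ) * (p:ℂ)/(k:ℂ)) = (t:ℂ) := by
      apply mul_left_cancel₀ hπ
      rw [ht]; ring
    have h3 : (m:ℂ) * (p:ℂ) = (t:ℂ) * (k:ℂ) := by
      field_simp at h2
      linear_combination h2
    have h4 : (m:ℤ) * p = t * (k:ℤ) := by exact_mod_cast h3
    have hdvd : (k:ℤ) ∣ (m:ℤ) * p := ⟨t, by linarith⟩
    have hcop' : IsCoprime (k:ℤ) p := by
      rw [Int.isCoprime_iff_gcd_eq_one, Int.gcd_comm]
      exact hcop
    have hdvd2 : (k:ℤ) ∣ (m:ℤ) := (IsCoprime.dvd_of_dvd_mul_right hcop' hdvd)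
    have : (k:ℤ) ≤ (m:ℤ) := Int.le_of_dvd (by exact_mod_cast hm1) hdvd2
    omega
  have hβ1 : β ≠ 1 := by
    have := hβm 1 le_rfl (by omega)
    simpa using this
  constructor
  · rw [hpow]
    have hc : (∑ j ∈ Finset.range k, β ^ j) = 0 := by
      have hg := geom_sum_mul β k
      rw [hβk, sub_self] at hg
      rcases mul_eq_zero.mp hg with h | h
      · exact h
      · exact absurd (sub_eq_zero.mp h) hβ1
    rw [hc, zero_smul, add_zero]
  · intro m hm1 hm2 h
    rw [hpow] at h
    set c := ∑ j ∈ Finset.range m, β ^ j with hcm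
    have hc0 : c ≠ 0 := by
      intro hc
      have hg := geom_sum_mul β m
      rw [← hcm, hc, zero_mul] at hg
      exact hβm m hm1 hm2 (sub_eq_zero.mp hg.symm)
    have h2 : c * (β - 1) = 0 := by
      have h3 := congrFun (congrFun h r) r
      simp only [Matrix.add_apply, Matrix.smul_apply, Matrix.one_apply_eq, hErr,
        smul_eq_mul] at h3
      linear_combination h3
    rcases mul_eq_zero.mp h2 with h | h
    · exact hc0 h
    · exact hβ1 (sub_eq_zero.mp h)
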